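/- Let f₁, f₂, f₃ be an ℝ-basis of Euclidean space ℝ³ and let L be its ℤ-span (the Bravais lattice generated by f₁, f₂, f₃). Let n ∈ ℝ³ be nonzero and suppose the plane with normal n is rational, i.e. the inner product ⟨n, fⱼ⟩ is an integer for each j = 1, 2, 3. Then there exist vectors g₁, g₂, g₃ ∈ ℝ³ that are linearly independent over ℝ, whose ℤ-span equals L, and which satisfy g₃ = f₃ and ⟨n, g₂⟩ = 0. -/

import Mathlib

open RealInnerProductSpace

/-- A Bravais lattice in ℝ³ with a rational plane (normal `n`) admits an
equivalent set of lattice vectors `g` with `g₃ = f₃` and `g₂ ⊥ n`. -/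
theorem bravais_lattice_basis_with_one_vector_in_plane
    (f : Module.Basis (Fin 3) ℝ (EuclideanSpace ℝ (Fin 3)))
    (n : EuclideanSpace ℝ (Fin 3)) (hn : n ≠ 0)
    (hrat : ∀ j : Fin 3, ∃ m : ℤ, ⟪n, f j⟫ = (m : ℝ)) :
    ∃ g : Fin 3 → EuclideanSpace ℝ (Fin 3),
      LinearIndependent ℝ g ∧
      Submodule.span ℤ (Set.range g)
        = Submodule.span ℤ (Set.range (f : Fin 3 → EuclideanSpace ℝ (Fin 3))) ∧
      g 2 = f 2 ∧ ⟪n, g 1⟫ = 0 := by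
  obtain ⟨m0, hm0⟩ := hrat 0
  obtain ⟨m1, hm1⟩ := hrat 1
  by_cases h1 : m1 = 0
  · exact ⟨f, f.linearIndependent, rfl, rfl, by rw [hm1, h1]; norm_num⟩
  · set d : ℤ := (Int.gcd m0 m1 : ℤ) with hdd
    have hd : d ≠ 0 := by
      intro h
      rw [hdd, Int.natCast_eq_zero, Int.gcd_eq_zero_iff] at h
      exact h1 h.2
    set x : ℤ := Int.gcdA m0 m1 with hxx
    set y : ℤ := Int.gcdB m0 m1 with hyy
    have hbezout : d = m0 * x + m1 * y := Int.gcd_eq_gcd_ab m0 m1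
    set a : ℤ := m0 / d with haa
    set b : ℤ := m1 / d with hbb
    have ha : a * d = m0 := Int.ediv_mul_cancel (Int.gcd_dvd_left m0 m1)
    have hb : b * d = m1 := Int.ediv_mul_cancel (Int.gcd_dvd_right m0 m1)
    have hunit : x * a + y * b = 1 := by
      have h2 : d * (x * a + y * b) = d * 1 := by
        rw [mul_one]
        linear_combination -hbezout + x * ha + y * hb
      exact mul_left_cancel₀ hd h2
    -- real versions
    have haR : (a : ℝ) * d = m0 := by exact_mod_cast ha
    have hbR : (b : ℝ) * d = m1 := by exact_mod_cast hb
    have hunitR : (x : ℝ) * a + (y : ℝ) * b = 1 := by exact_mod_cast hunit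
    set g : Fin 3 → EuclideanSpace ℝ (Fin 3) :=
      ![(x : ℝ) • f 0 + (y : ℝ) • f 1,
        (-(b : ℝ)) • f 0 + (a : ℝ) • f 1,
        f 2] with hg
    have hg0 : g 0 = (x : ℝ) • f 0 + (y : ℝ) • f 1 := rfl
    have hg1 : g 1 = (-(b : ℝ)) • f 0 + (a : ℝ) • f 1 := rfl
    have hg2 : g 2 = f 2 := rfl
    -- inverse expressions
    have hf0 : f 0 = (a : ℝ) • g 0 + (-(y : ℝ)) • g 1 := by
      rw [hg0, hg1]
      have h : f 0 = ((x : ℝ) * a + (y : ℝ) * b) • f 0 := by rw [hunitR, one_smul]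
      conv_lhs => rw [h]
      module
    have hf1 : f 1 = (b : ℝ) • g 0 + (x : ℝ) • g 1 := by
      rw [hg0, hg1]
      have h : f 1 = ((x : ℝ) * a + (y : ℝ) * b) • f 1 := by rw [hunitR, one_smul]
      conv_lhs => rw [h]
      module
    refine ⟨g, ?_, ?_, hg2, ?_⟩
    · rw [Fintype.linearIndependent_iff]
      intro c hc
      rw [Fin.sum_univ_three, hg0, hg1, hg2] at hc
      have hc' : (c 0 * (x : ℝ) + c 1 * (-(b : ℝ))) • f 0
          + (c 0 * (y : ℝ) + c 1 * (a : ℝ)) • f 1 + c 2 • f 2 = 0 := by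
        linear_combination (norm := module) hc
      have e := Fintype.linearIndependent_iff.mp f.linearIndependent
        ![c 0 * (x : ℝ) + c 1 * (-(b : ℝ)), c 0 * (y : ℝ) + c 1 * (a : ℝ), c 2]
        (by rw [Fin.sum_univ_three]; simpa using hc')
      have e0 : c 0 * (x : ℝ) + c 1 * (-(b : ℝ)) = 0 := by simpa using e 0
      have e1 : c 0 * (y : ℝ) + c 1 * (a : ℝ) = 0 := by simpa using e 1
      have e2 : c 2 = 0 := by simpa using e 2
      intro i
      fin_cases i
      · show c 0 = 0
        linear_combination (a : ℝ) * e0 + (b : ℝ) * e1 - c 0 * hunitR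
      · show c 1 = 0
        linear_combination (-(y : ℝ)) * e0 + (x : ℝ) * e1 - c 1 * hunitR
      · exact e2
    · apply le_antisymm
      · rw [Submodule.span_le]
        rintro v ⟨i, rfl⟩
        fin_cases i
        · show g 0 ∈ Submodule.span ℤ (Set.range ⇑f)
          rw [hg0, Int.cast_smul_eq_zsmul, Int.cast_smul_eq_zsmul]
          exact Submodule.add_mem _
            (Submodule.smul_mem _ _ (Submodule.subset_span ⟨0, rfl⟩))
            (Submodule.smul_mem _ _ (Submodule.subset_span ⟨1, rfl⟩))
        · show g 1 ∈ Submodule.span ℤ (Set.range ⇑f)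
          rw [hg1, show (-(b : ℝ)) = ((-b : ℤ) : ℝ) by push_cast; ring,
            Int.cast_smul_eq_zsmul, Int.cast_smul_eq_zsmul]
          exact Submodule.add_mem _
            (Submodule.smul_mem _ _ (Submodule.subset_span ⟨0, rfl⟩))
            (Submodule.smul_mem _ _ (Submodule.subset_span ⟨1, rfl⟩))
        · exact Submodule.subset_span ⟨2, rfl⟩
      · rw [Submodule.span_le]
        rintro v ⟨i, rfl⟩
        fin_cases i
        · show f 0 ∈ Submodule.span ℤ (Set.range g)
          rw [hf0, show (-(y : ℝ)) = ((-y : ℤ) : ℝ) by push_cast; ring,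
            Int.cast_smul_eq_zsmul, Int.cast_smul_eq_zsmul]
          exact Submodule.add_mem _
            (Submodule.smul_mem _ _ (Submodule.subset_span ⟨0, rfl⟩))
            (Submodule.smul_mem _ _ (Submodule.subset_span ⟨1, rfl⟩))
        · show f 1 ∈ Submodule.span ℤ (Set.range g)
          rw [hf1, Int.cast_smul_eq_zsmul, Int.cast_smul_eq_zsmul]
          exact Submodule.add_mem _
            (Submodule.smul_mem _ _ (Submodule.subset_span ⟨0, rfl⟩))
            (Submodule.smul_mem _ _ (Submodule.subset_span ⟨1, rfl⟩))
        · show f 2 ∈ Submodule.span ℤ (Set.range g)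
          rw [← hg2]; exact Submodule.subset_span ⟨2, rfl⟩
    · rw [hg1, inner_add_right, real_inner_smul_right, real_inner_smul_right,
        hm0, hm1]
      linear_combination (b : ℝ) * haR - (a : ℝ) * hbR
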